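/- Let ℓ ≥ 2 be an integer and let m be a Borel probability measure on [0,1)^D equipped with the filtration (ℱ_n) of ℓ-adic cubes. Then dim_*(m) ≤ h_*(m), where dim_*(m) is the lower Hausdorff dimension of m and h_*(m) = liminf_{n→∞} (−1/(n log ℓ)) Σ_{I∈ℱ_n} m(I) log m(I) is its lower entropy. -/

import Mathlib

open MeasureTheory Filter Topology
open scoped ENNReal NNReal

noncomputable section

def lCube (D ℓ n : ℕ) (k : Fin D → ℕ) : Set (EuclideanSpace ℝ (Fin D)) :=
  {x | ∀ i, (k i : ℝ) / (ℓ : ℝ) ^ n ≤ x i ∧ x i < ((k i : ℝ) + 1) / (ℓ : ℝ) ^ n}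

def unitBox (D : ℕ) : Set (EuclideanSpace ℝ (Fin D)) :=
  {x | ∀ i, 0 ≤ x i ∧ x i < 1}

def lCubeAt (D ℓ n : ℕ) (x : EuclideanSpace ℝ (Fin D)) : Set (EuclideanSpace ℝ (Fin D)) :=
  lCube D ℓ n (fun i => ⌊x i * (ℓ : ℝ) ^ n⌋₊)

def cubeEntropySum (D ℓ : ℕ) (m : Measure (EuclideanSpace ℝ (Fin D))) (n : ℕ) : ℝ :=
  ∑ k : Fin D → Fin (ℓ ^ n),
    (m (lCube D ℓ n fun i => (k i : ℕ))).toReal *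
      Real.log (m (lCube D ℓ n fun i => (k i : ℕ))).toReal

def cubeHLow (D ℓ : ℕ) (m : Measure (EuclideanSpace ℝ (Fin D))) : ℝ :=
  liminf (fun n : ℕ => (-1 / (n * Real.log ℓ)) * cubeEntropySum D ℓ m n) atTop

def cubeDimLow (D : ℕ) (m : Measure (EuclideanSpace ℝ (Fin D))) : ℝ≥0∞ :=
  ⨅ (E : Set (EuclideanSpace ℝ (Fin D))) (_ : MeasurableSet E) (_ : E ⊆ unitBox D)
    (_ : 0 < m E), dimH E


def cubeDimUpp (D : ℕ) (m : Measure (EuclideanSpace ℝ (Fin D))) : ℝ≥0∞ :=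
  ⨅ (E : Set (EuclideanSpace ℝ (Fin D))) (_ : MeasurableSet E) (_ : E ⊆ unitBox D)
    (_ : m (unitBox D \ E) = 0), dimH E

variable {D ℓ : ℕ}

lemma lCube_measurableSet (D ℓ n : ℕ) (k : Fin D → ℕ) : MeasurableSet (lCube D ℓ n k) := by
  have h : lCube D ℓ n k = ⋂ i, (EuclideanSpace.proj (𝕜 := ℝ) i) ⁻¹'
      Set.Ico ((k i : ℝ) / (ℓ:ℝ)^n) (((k i : ℝ)+1) / (ℓ:ℝ)^n) := by
    ext x
    simp only [lCube, Set.mem_setOf_eq, Set.mem_iInter, Set.mem_preimage, Set.mem_Ico]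
    exact Iff.rfl
  rw [h]
  exact MeasurableSet.iInter fun i =>
    (EuclideanSpace.proj i).continuous.measurable measurableSet_Ico

lemma mem_lCube (hℓ : 2 ≤ ℓ) {n : ℕ} {k : Fin D → ℕ} {x : EuclideanSpace ℝ (Fin D)} :
    x ∈ lCube D ℓ n k ↔ ∀ i, (k i : ℝ) ≤ x i * (ℓ:ℝ)^n ∧ x i * (ℓ:ℝ)^n < (k i : ℝ) + 1 := by
  have hp : (0:ℝ) < (ℓ:ℝ)^n := by positivity
  simp only [lCube, Set.mem_setOf_eq]
  exact forall_congr' fun i => and_congr (div_le_iff₀ hp) (lt_div_iff₀ hp)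

lemma floor_eq_of_mem_lCube (hℓ : 2 ≤ ℓ) {n : ℕ} {k : Fin D → ℕ}
    {x : EuclideanSpace ℝ (Fin D)} (hx : x ∈ lCube D ℓ n k) (i : Fin D) :
    ⌊x i * (ℓ:ℝ)^n⌋₊ = k i := by
  rcases (mem_lCube hℓ).1 hx i with ⟨h1, h2⟩
  exact Nat.floor_eq_iff (le_trans (Nat.cast_nonneg _) h1) |>.2 ⟨h1, h2⟩

lemma lCube_disjoint (hℓ : 2 ≤ ℓ) {n : ℕ} {k k' : Fin D → ℕ} (h : k ≠ k') :
    Disjoint (lCube D ℓ n k) (lCube D ℓ n k') := by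
  rw [Set.disjoint_left]
  intro x hx hx'
  exact h (funext fun i => (floor_eq_of_mem_lCube hℓ hx i).symm.trans
    (floor_eq_of_mem_lCube hℓ hx' i))

lemma lCube_subset_unitBox (hℓ : 2 ≤ ℓ) {n : ℕ} {k : Fin D → ℕ} (hk : ∀ i, k i < ℓ ^ n) :
    lCube D ℓ n k ⊆ unitBox D := by
  intro x hx i
  have hp : (0:ℝ) < (ℓ:ℝ)^n := by positivity
  rcases hx i with ⟨h1, h2⟩
  constructor
  · exact le_trans (by positivity) h1
  · have h3 : k i + 1 ≤ ℓ ^ n := hk i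
    have : ((k i : ℝ) + 1) ≤ (ℓ:ℝ)^n := by exact_mod_cast h3
    calc x i < ((k i : ℝ)+1)/(ℓ:ℝ)^n := h2
      _ ≤ 1 := by rw [div_le_one hp]; exact this

lemma iUnion_lCube (hℓ : 2 ≤ ℓ) (n : ℕ) :
    ⋃ k : Fin D → Fin (ℓ ^ n), lCube D ℓ n (fun i => (k i : ℕ)) = unitBox D := by
  apply Set.Subset.antisymm
  · exact Set.iUnion_subset fun k => lCube_subset_unitBox hℓ fun i => (k i).2
  · intro x hx
    have hp : (0:ℝ) < (ℓ:ℝ)^n := by positivity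
    have hnn : ∀ i : Fin D, 0 ≤ x i * (ℓ:ℝ)^n := fun i => mul_nonneg (hx i).1 hp.le
    have hlt : ∀ i, ⌊x i * (ℓ:ℝ)^n⌋₊ < ℓ ^ n := by
      intro i
      refine (Nat.floor_lt (hnn i)).2 ?_
      push_cast
      nlinarith [(hx i).2, hp]
    refine Set.mem_iUnion.2 ⟨fun i => ⟨⌊x i * (ℓ:ℝ)^n⌋₊, hlt i⟩, ?_⟩
    rw [mem_lCube hℓ]
    intro i
    exact ⟨Nat.floor_le (hnn i), Nat.lt_floor_add_one _⟩

lemma sum_measure_lCube (hℓ : 2 ≤ ℓ) (m : Measure (EuclideanSpace ℝ (Fin D)))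
    (hsupp : m (unitBox D) = 1) (n : ℕ) :
    ∑ k : Fin D → Fin (ℓ ^ n), m (lCube D ℓ n fun i => (k i : ℕ)) = 1 := by
  rw [← hsupp, ← iUnion_lCube hℓ n, measure_iUnion _ (fun k => lCube_measurableSet D ℓ n _), tsum_fintype]
  intro k k' hkk'
  apply lCube_disjoint hℓ
  intro h
  exact hkk' (funext fun i => Fin.ext (congrFun h i))


-- Jensen for negMulLog
lemma sum_negMulLog_le_log_card {α : Type*} [Fintype α] [Nonempty α] (p : α → ℝ)
    (hp : ∀ a, 0 ≤ p a) (hs : ∑ a, p a = 1) :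
    ∑ a, Real.negMulLog (p a) ≤ Real.log (Fintype.card α) := by
  set N := Fintype.card α with hN
  have hN0 : 0 < (N : ℝ) := by positivity
  have jensen := Real.concaveOn_negMulLog.le_map_sum (t := Finset.univ)
    (w := fun _ : α => 1 / (N : ℝ)) (p := p)
    (fun a _ => by positivity)
    (by rw [Finset.sum_const, Finset.card_univ, ← hN, nsmul_eq_mul]; field_simp)
    (fun a _ => hp a)
  have h1 : ∑ a, (1 / (N:ℝ)) • p a = 1 / N := by
    rw [← Finset.smul_sum]; simp [hs]
  rw [h1] at jensen
  have h2 : Real.negMulLog (1 / (N:ℝ)) = (1 / N) * Real.log N := by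
    rw [Real.negMulLog, Real.log_div one_ne_zero (ne_of_gt hN0), Real.log_one]
    ring
  rw [h2] at jensen
  have h3 : ∑ a, (1 / (N:ℝ)) • Real.negMulLog (p a) = (1/N) * ∑ a, Real.negMulLog (p a) := by
    rw [← Finset.smul_sum]; simp [smul_eq_mul]
  rw [h3] at jensen
  have := mul_le_mul_of_nonneg_left jensen (le_of_lt hN0)
  calc ∑ a, Real.negMulLog (p a) = (N:ℝ) * ((1/N) * ∑ a, Real.negMulLog (p a)) := by
        field_simp
    _ ≤ (N:ℝ) * ((1/N) * Real.log N) := this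
    _ = Real.log N := by field_simp

lemma diam_lCube_le (hℓ : 2 ≤ ℓ) (n : ℕ) (k : Fin D → ℕ) :
    EMetric.diam (lCube D ℓ n k) ≤
      ENNReal.ofReal (Real.sqrt D * ((ℓ:ℝ) ^ n)⁻¹) := by
  have hp : (0:ℝ) < (ℓ:ℝ)^n := by positivity
  apply EMetric.diam_le
  intro x hx y hy
  rw [edist_dist]
  apply ENNReal.ofReal_le_ofReal
  rw [EuclideanSpace.dist_eq]
  have hb : ∀ i, dist (x i) (y i) ≤ ((ℓ:ℝ)^n)⁻¹ := by
    intro i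
    rcases hx i with ⟨hx1, hx2⟩
    rcases hy i with ⟨hy1, hy2⟩
    rw [Real.dist_eq, abs_le]
    constructor
    · have : ((k i:ℝ)+1)/(ℓ:ℝ)^n - (k i:ℝ)/(ℓ:ℝ)^n = ((ℓ:ℝ)^n)⁻¹ := by field_simp; ring
      nlinarith [this]
    · have : ((k i:ℝ)+1)/(ℓ:ℝ)^n - (k i:ℝ)/(ℓ:ℝ)^n = ((ℓ:ℝ)^n)⁻¹ := by field_simp; ring
      nlinarith [this]
  calc Real.sqrt (∑ i, dist (x i) (y i) ^ 2)
      ≤ Real.sqrt (∑ _i : Fin D, (((ℓ:ℝ)^n)⁻¹)^2) := by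
        apply Real.sqrt_le_sqrt
        apply Finset.sum_le_sum
        intro i _
        exact pow_le_pow_left₀ dist_nonneg (hb i) 2
    _ = Real.sqrt ((D:ℝ) * (((ℓ:ℝ)^n)⁻¹)^2) := by
        rw [Finset.sum_const, Finset.card_univ, Fintype.card_fin, nsmul_eq_mul]
    _ = Real.sqrt D * ((ℓ:ℝ)^n)⁻¹ := by
        rw [Real.sqrt_mul (by positivity), Real.sqrt_sq (by positivity)]

section
variable (m : Measure (EuclideanSpace ℝ (Fin D))) [IsProbabilityMeasure m]

lemma toReal_measure_lCube_le_one (n : ℕ) (k : Fin D → ℕ) :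
    (m (lCube D ℓ n k)).toReal ≤ 1 := by
  have := prob_le_one (μ := m) (s := lCube D ℓ n k)
  simpa using ENNReal.toReal_mono ENNReal.one_ne_top this

lemma toReal_sum_lCube (hℓ : 2 ≤ ℓ) (hsupp : m (unitBox D) = 1) (n : ℕ) :
    ∑ k : Fin D → Fin (ℓ ^ n), (m (lCube D ℓ n fun i => (k i : ℕ))).toReal = 1 := by
  rw [← ENNReal.toReal_sum (fun a _ => measure_ne_top m _),
    sum_measure_lCube hℓ m hsupp n, ENNReal.toReal_one]

lemma neg_cubeEntropySum_eq (n : ℕ) :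
    -cubeEntropySum D ℓ m n =
      ∑ k : Fin D → Fin (ℓ ^ n), Real.negMulLog ((m (lCube D ℓ n fun i => (k i : ℕ))).toReal) := by
  rw [cubeEntropySum, ← Finset.sum_neg_distrib]
  exact Finset.sum_congr rfl fun k _ => by rw [Real.negMulLog_eq_neg]

lemma neg_cubeEntropySum_nonneg (n : ℕ) : 0 ≤ -cubeEntropySum D ℓ m n := by
  rw [neg_cubeEntropySum_eq]
  exact Finset.sum_nonneg fun k _ =>
    Real.negMulLog_nonneg ENNReal.toReal_nonneg (toReal_measure_lCube_le_one m n _)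

lemma neg_cubeEntropySum_le (hℓ : 2 ≤ ℓ) (hsupp : m (unitBox D) = 1) (n : ℕ) :
    -cubeEntropySum D ℓ m n ≤ (n * D : ℝ) * Real.log ℓ := by
  haveI : Nonempty (Fin (ℓ ^ n)) := ⟨⟨0, by positivity⟩⟩
  rw [neg_cubeEntropySum_eq]
  calc ∑ k : Fin D → Fin (ℓ ^ n), Real.negMulLog ((m (lCube D ℓ n fun i => (k i : ℕ))).toReal)
      ≤ Real.log (Fintype.card (Fin D → Fin (ℓ ^ n))) :=
        sum_negMulLog_le_log_card _ (fun k => ENNReal.toReal_nonneg)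
          (toReal_sum_lCube m hℓ hsupp n)
    _ = (n * D : ℝ) * Real.log ℓ := by
        rw [Fintype.card_fun, Fintype.card_fin, Fintype.card_fin, ← pow_mul]
        rw [Nat.cast_pow, Real.log_pow]
        push_cast; ring

lemma uFun_nonneg (hℓ : 2 ≤ ℓ) (n : ℕ) :
    0 ≤ (-1 / (n * Real.log ℓ)) * cubeEntropySum D ℓ m n := by
  have hlog : 0 < Real.log ℓ := Real.log_pos (by exact_mod_cast hℓ)
  have heq : (-1 / ((n:ℝ) * Real.log ℓ)) * cubeEntropySum D ℓ m n
      = (1 / ((n:ℝ) * Real.log ℓ)) * (-cubeEntropySum D ℓ m n) := by ring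
  rw [heq]
  exact mul_nonneg (by positivity) (neg_cubeEntropySum_nonneg m n)

lemma uFun_le (hℓ : 2 ≤ ℓ) (hsupp : m (unitBox D) = 1) (n : ℕ) :
    (-1 / (n * Real.log ℓ)) * cubeEntropySum D ℓ m n ≤ (D : ℝ) := by
  have hlog : 0 < Real.log ℓ := Real.log_pos (by exact_mod_cast hℓ)
  rcases Nat.eq_zero_or_pos n with rfl | hn
  · norm_num
  have hn0 : (0:ℝ) < (n:ℝ) * Real.log ℓ := by
    have : (0:ℝ) < n := by exact_mod_cast hn
    positivity
  have heq : (-1 / ((n:ℝ) * Real.log ℓ)) * cubeEntropySum D ℓ m n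
      = (-cubeEntropySum D ℓ m n) / ((n:ℝ) * Real.log ℓ) := by ring
  rw [heq, div_le_iff₀ hn0]
  calc -cubeEntropySum D ℓ m n ≤ (n * D : ℝ) * Real.log ℓ :=
        neg_cubeEntropySum_le m hℓ hsupp n
    _ = (D:ℝ) * ((n:ℝ) * Real.log ℓ) := by ring

end

lemma geom_real_bound {L s c t d ε : ℝ} {n : ℕ} (hL : 1 < L) (hs : 0 ≤ s) (hc : 0 ≤ c)
    (hd : 0 < d) (htd : t + ε = d)
    (hcard : c * L ^ (-(n:ℝ) * t) ≤ 1) :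
    c * (s * ((L ^ n : ℝ))⁻¹) ^ d ≤ s ^ d * (L ^ (-ε)) ^ n := by
  have hL0 : (0:ℝ) < L := by linarith
  have hc' : c ≤ L ^ ((n:ℝ) * t) := by
    have h2 : L ^ (-(n:ℝ) * t) = (L ^ ((n:ℝ) * t))⁻¹ := by
      rw [← Real.rpow_neg hL0.le]; ring_nf
    rw [h2] at hcard
    have h3 : (0:ℝ) < L ^ ((n:ℝ) * t) := Real.rpow_pos_of_pos hL0 _
    calc c = c * (L ^ ((n:ℝ)*t))⁻¹ * L ^ ((n:ℝ)*t) := by field_simp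
      _ ≤ 1 * L ^ ((n:ℝ)*t) := mul_le_mul_of_nonneg_right hcard h3.le
      _ = L ^ ((n:ℝ)*t) := one_mul _
  have hinv : ((L ^ n : ℝ))⁻¹ = L ^ (-(n:ℝ)) := by
    rw [← Real.rpow_natCast L n, ← Real.rpow_neg hL0.le]
  have hsplit : (s * ((L ^ n : ℝ))⁻¹) ^ d = s ^ d * L ^ (-(n:ℝ) * d) := by
    rw [hinv, Real.mul_rpow hs (Real.rpow_nonneg hL0.le _), ← Real.rpow_mul hL0.le]
  have hgeom : L ^ ((n:ℝ)*t) * L ^ (-(n:ℝ)*d) = (L ^ (-ε)) ^ n := by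
    rw [← Real.rpow_add hL0, ← Real.rpow_natCast (L ^ (-ε)) n, ← Real.rpow_mul hL0.le]
    congr 1
    nlinarith [htd]
  calc c * (s * ((L ^ n : ℝ))⁻¹) ^ d = c * (s ^ d * L ^ (-(n:ℝ)*d)) := by rw [hsplit]
    _ ≤ L ^ ((n:ℝ)*t) * (s ^ d * L ^ (-(n:ℝ)*d)) := by
        apply mul_le_mul_of_nonneg_right hc'
        positivity
    _ = s ^ d * (L ^ ((n:ℝ)*t) * L ^ (-(n:ℝ)*d)) := by ring
    _ = s ^ d * (L ^ (-ε)) ^ n := by rw [hgeom]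

lemma cubeDimLow_le_add (hD : 1 ≤ D) (hℓ : 2 ≤ ℓ)
    (m : Measure (EuclideanSpace ℝ (Fin D))) [IsProbabilityMeasure m]
    (hsupp : m (unitBox D) = 1) {ε : ℝ} (hε : 0 < ε) :
    cubeDimLow D m ≤ ENNReal.ofReal (cubeHLow D ℓ m + 3 * ε) := by
  have hℓ1 : (1:ℝ) < (ℓ:ℝ) := by
    have : (2:ℝ) ≤ (ℓ:ℝ) := by exact_mod_cast hℓ
    linarith
  have hℓ0 : (0:ℝ) < (ℓ:ℝ) := by linarith
  have hlog : 0 < Real.log ℓ := Real.log_pos hℓ1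
  set u : ℕ → ℝ := fun n => (-1 / (n * Real.log ℓ)) * cubeEntropySum D ℓ m n with hu
  have hbdd : IsBoundedUnder (· ≤ ·) atTop u :=
    Filter.isBoundedUnder_of ⟨(D:ℝ), fun n => uFun_le m hℓ hsupp n⟩
  have hcob : IsCoboundedUnder (· ≥ ·) atTop u := hbdd.isCoboundedUnder_ge
  have hliminf : cubeHLow D ℓ m = liminf u atTop := rfl
  set h := cubeHLow D ℓ m with hh
  have h0 : 0 ≤ h := by
    rw [hliminf]
    exact le_liminf_of_le hcob (Filter.Eventually.of_forall (fun n => uFun_nonneg m hℓ n))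
  have hfreq : ∃ᶠ n in atTop, u n < h + ε :=
    frequently_lt_of_liminf_lt hcob (by rw [← hliminf]; linarith)
  obtain ⟨φ, hφ, hφP⟩ := Filter.extraction_of_frequently_atTop hfreq
  set ψ : ℕ → ℕ := fun j => φ (j + 1) with hψdef
  have hψmono : StrictMono ψ := fun a b hab => hφ (by omega)
  have hψge : ∀ j, j + 1 ≤ ψ j := fun j => (hφ.le_apply : j + 1 ≤ φ (j + 1))
  have hψu : ∀ j, u (ψ j) < h + ε := fun j => hφP (j + 1)
  set t : ℝ := h + 2 * ε with htdef
  have ht : 0 < t := by simp only [htdef]; linarith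
  set d : ℝ := h + 3 * ε with hddef
  have hd : 0 < d := by simp only [hddef]; linarith
  have htd : t < d := by simp only [htdef, hddef]; linarith
  -- the measures of the cubes, as reals
  set p : ∀ n : ℕ, (Fin D → Fin (ℓ ^ n)) → ℝ :=
    fun n k => (m (lCube D ℓ n fun i => (k i : ℕ))).toReal with hpdef
  have hp0 : ∀ n k, 0 ≤ p n k := fun n k => ENNReal.toReal_nonneg
  have hp1 : ∀ n k, p n k ≤ 1 := fun n k => toReal_measure_lCube_le_one m _ _
  have hpsum : ∀ n, ∑ k, p n k = 1 := fun n => toReal_sum_lCube m hℓ hsupp n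
  -- good cubes
  set S : ∀ n : ℕ, Finset (Fin D → Fin (ℓ ^ n)) :=
    fun n => Finset.univ.filter (fun k => (ℓ:ℝ) ^ (-(n:ℝ) * t) ≤ p n k) with hSdef
  have hcard : ∀ n : ℕ, ((S n).card : ℝ) * (ℓ:ℝ) ^ (-(n:ℝ) * t) ≤ 1 := by
    intro n
    have h1 : ((S n).card : ℝ) * (ℓ:ℝ) ^ (-(n:ℝ) * t)
        = ∑ _k ∈ S n, (ℓ:ℝ) ^ (-(n:ℝ) * t) := by
      rw [Finset.sum_const, nsmul_eq_mul]
    rw [h1]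
    calc ∑ k ∈ S n, (ℓ:ℝ) ^ (-(n:ℝ) * t) ≤ ∑ k ∈ S n, p n k :=
          Finset.sum_le_sum fun k hk => (Finset.mem_filter.1 hk).2
      _ ≤ ∑ k, p n k := Finset.sum_le_sum_of_subset_of_nonneg (Finset.filter_subset _ _)
          (fun k _ _ => hp0 n k)
      _ = 1 := hpsum n
  -- the mass of the good cubes is at least ε / t along good generations
  have hgood : ∀ n : ℕ, 1 ≤ n → u n < h + ε → ε / t ≤ ∑ k ∈ S n, p n k := by
    intro n hn hun
    have hnR : (0:ℝ) < n := by exact_mod_cast hn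
    have hpt : ∀ k ∈ Finset.univ \ S n,
        p n k * ((n:ℝ) * t * Real.log ℓ) ≤ Real.negMulLog (p n k) := by
      intro k hk
      have hklt : p n k < (ℓ:ℝ) ^ (-(n:ℝ) * t) := by
        rcases Finset.mem_sdiff.1 hk with ⟨-, hk2⟩
        by_contra hc
        exact hk2 (Finset.mem_filter.2 ⟨Finset.mem_univ _, not_lt.1 hc⟩)
      rcases eq_or_lt_of_le (hp0 n k) with he | hpos
      · rw [← he]; simp
      · have hlogp : Real.log (p n k) ≤ -(n:ℝ) * t * Real.log ℓ := by
          have h2 := Real.log_le_log hpos hklt.le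
          rwa [Real.log_rpow hℓ0] at h2
        have h3 : Real.negMulLog (p n k) = p n k * (-Real.log (p n k)) := by
          rw [Real.negMulLog]; ring
        rw [h3]
        apply mul_le_mul_of_nonneg_left _ (hp0 n k)
        linarith
    have hsum1 : ((n:ℝ) * t * Real.log ℓ) * ∑ k ∈ Finset.univ \ S n, p n k
        ≤ -cubeEntropySum D ℓ m n := by
      rw [Finset.mul_sum]
      calc ∑ k ∈ Finset.univ \ S n, ((n:ℝ) * t * Real.log ℓ) * p n k
          = ∑ k ∈ Finset.univ \ S n, p n k * ((n:ℝ) * t * Real.log ℓ) := by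
            exact Finset.sum_congr rfl fun k _ => mul_comm _ _
        _ ≤ ∑ k ∈ Finset.univ \ S n, Real.negMulLog (p n k) := Finset.sum_le_sum hpt
        _ ≤ ∑ k, Real.negMulLog (p n k) :=
            Finset.sum_le_sum_of_subset_of_nonneg (Finset.sdiff_subset)
              (fun k _ _ => Real.negMulLog_nonneg (hp0 n k) (hp1 n k))
        _ = -cubeEntropySum D ℓ m n := (neg_cubeEntropySum_eq m n).symm
    have hEnt : -cubeEntropySum D ℓ m n = u n * ((n:ℝ) * Real.log ℓ) := by
      rw [hu]
      have hne : (n:ℝ) * Real.log ℓ ≠ 0 := by positivity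
      field_simp
    have hbad : ∑ k ∈ Finset.univ \ S n, p n k ≤ u n / t := by
      rw [hEnt] at hsum1
      have hpos' : 0 < (n:ℝ) * t * Real.log ℓ := by positivity
      rw [le_div_iff₀ ht]
      nlinarith [hsum1]
    have hsplit : ∑ k ∈ Finset.univ \ S n, p n k + ∑ k ∈ S n, p n k = 1 := by
      rw [Finset.sum_sdiff (Finset.filter_subset _ _)]
      exact hpsum n
    have hun' : u n / t < (h + ε) / t := by gcongr
    have heq2 : (h + ε) / t = 1 - ε / t := by
      field_simp
      rw [htdef]; ring
    linarith
  -- good unions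
  set A : ℕ → Set (EuclideanSpace ℝ (Fin D)) :=
    fun n => ⋃ k ∈ S n, lCube D ℓ n (fun i => (k i : ℕ)) with hAdef
  have hAmeas : ∀ n, MeasurableSet (A n) :=
    fun n => (S n).measurableSet_biUnion (fun k _ => lCube_measurableSet D ℓ n _)
  have hAsub : ∀ n, A n ⊆ unitBox D :=
    fun n => Set.iUnion₂_subset fun k _ => lCube_subset_unitBox hℓ fun i => (k i).2
  have hAmes : ∀ n, m (A n) = ∑ k ∈ S n, m (lCube D ℓ n fun i => (k i : ℕ)) := by
    intro n
    apply measure_biUnion_finset _ (fun k _ => lCube_measurableSet D ℓ n _)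
    intro k _ k' _ hkk'
    exact lCube_disjoint hℓ (fun hcontr => hkk'
      (funext fun i => Fin.ext (congrFun hcontr i)))
  have hAlow : ∀ j, ENNReal.ofReal (ε / t) ≤ m (A (ψ j)) := by
    intro j
    have hg := hgood (ψ j) (le_trans (by omega) (hψge j)) (hψu j)
    apply ENNReal.ofReal_le_of_le_toReal
    rw [hAmes, ENNReal.toReal_sum (fun k _ => measure_ne_top m _)]
    exact hg
  set F : ℕ → Set (EuclideanSpace ℝ (Fin D)) := fun J => ⋃ j, A (ψ (J + j)) with hFdef
  have hFmeas : ∀ J, MeasurableSet (F J) := fun J => MeasurableSet.iUnion fun j => hAmeas _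
  have hFanti : Antitone F := by
    apply antitone_nat_of_succ_le
    intro J
    apply Set.iUnion_subset
    intro j
    rw [show J + 1 + j = J + (j + 1) by omega]
    exact Set.subset_iUnion (fun j' => A (ψ (J + j'))) (j + 1)
  set E : Set (EuclideanSpace ℝ (Fin D)) := ⋂ J, F J with hEdef
  have hEmeas : MeasurableSet E := MeasurableSet.iInter fun J => hFmeas J
  have hEsub : E ⊆ unitBox D :=
    (Set.iInter_subset F 0).trans (Set.iUnion_subset fun j => hAsub _)
  have hEm : ENNReal.ofReal (ε / t) ≤ m E := by
    rw [hEdef, Directed.measure_iInter (fun J => (hFmeas J).nullMeasurableSet)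
      (hFanti.directed_ge) ⟨0, measure_ne_top m _⟩]
    refine le_iInf fun J => le_trans (hAlow J) (measure_mono ?_)
    exact Set.subset_iUnion (fun j => A (ψ (J + j))) 0
  have hEpos : 0 < m E :=
    lt_of_lt_of_le (ENNReal.ofReal_pos.2 (div_pos hε ht)) hEm
  -- geometric ratio
  set q : ℝ := (ℓ:ℝ) ^ (-ε) with hqdef
  have hq0 : 0 < q := Real.rpow_pos_of_pos hℓ0 _
  have hq1 : q < 1 := Real.rpow_lt_one_of_one_lt_of_neg hℓ1 (by linarith)
  -- Hausdorff measure of E in dimension d vanishes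
  have hHzero : μH[d] E = 0 := by
    set T : ∀ J : ℕ, ((j : ℕ) × (Fin D → Fin (ℓ ^ (ψ (J + j))))) →
        Set (EuclideanSpace ℝ (Fin D)) := fun J i =>
      if i.2 ∈ S (ψ (J + i.1)) then lCube D ℓ (ψ (J + i.1)) (fun a => ((i.2 a : ℕ))) else ∅
      with hTdef
    set r : ℕ → ℝ≥0∞ := fun J => ENNReal.ofReal (Real.sqrt D * ((ℓ:ℝ) ^ (ψ J))⁻¹) with hrdef
    have hr0 : Tendsto r atTop (𝓝 0) := by
      have h2 : Tendsto (fun J : ℕ => ((ℓ:ℝ) ^ (ψ J))) atTop atTop :=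
        (tendsto_pow_atTop_atTop_of_one_lt hℓ1).comp hψmono.tendsto_atTop
      have h3 : Tendsto (fun J : ℕ => Real.sqrt D * ((ℓ:ℝ) ^ (ψ J))⁻¹) atTop (𝓝 0) := by
        have h4 := (tendsto_inv_atTop_zero.comp h2).const_mul (Real.sqrt D)
        simpa using h4
      have h5 := (ENNReal.continuous_ofReal.tendsto 0).comp h3
      rw [hrdef]; simpa [Function.comp_def] using h5
    have hcover : ∀ᶠ J in atTop, E ⊆ ⋃ i, T J i := by
      apply Filter.Eventually.of_forall
      intro J x hx
      have hx' : x ∈ F J := Set.iInter_subset F J hx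
      obtain ⟨j, hj⟩ := Set.mem_iUnion.1 hx'
      obtain ⟨k, hk, hxk⟩ := Set.mem_iUnion₂.1 hj
      refine Set.mem_iUnion.2 ⟨⟨j, k⟩, ?_⟩
      have : T J ⟨j, k⟩ = lCube D ℓ (ψ (J + j)) (fun a => ((k a : ℕ))) := by
        rw [hTdef]; exact if_pos hk
      rw [this]; exact hxk
    have hdT : ∀ᶠ J in atTop, ∀ i, EMetric.diam (T J i) ≤ r J := by
      apply Filter.Eventually.of_forall
      intro J i
      rcases i with ⟨j, k⟩
      by_cases hk : k ∈ S (ψ (J + j))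
      · have hTeq : T J ⟨j, k⟩ = lCube D ℓ (ψ (J + j)) (fun a => ((k a : ℕ))) := by
          rw [hTdef]; exact if_pos hk
        rw [hTeq]
        refine le_trans (diam_lCube_le hℓ _ _) (ENNReal.ofReal_le_ofReal ?_)
        have hmono : (ℓ:ℝ) ^ (ψ J) ≤ (ℓ:ℝ) ^ (ψ (J + j)) :=
          pow_le_pow_right₀ hℓ1.le (hψmono.monotone (Nat.le_add_right J j))
        have hpos : (0:ℝ) < (ℓ:ℝ) ^ (ψ J) := by positivity
        gcongr
      · have hTeq : T J ⟨j, k⟩ = (∅ : Set (EuclideanSpace ℝ (Fin D))) := by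
          rw [hTdef]; exact if_neg hk
        rw [hTeq, EMetric.diam, Metric.ediam_empty]
        exact zero_le
    have hmain := MeasureTheory.Measure.hausdorffMeasure_le_liminf_tsum d E r hr0 T hdT hcover
    -- bound the sums
    set K : ℝ≥0∞ := (1 - ENNReal.ofReal q)⁻¹ with hKdef
    have hKne : K ≠ ∞ := by
      rw [hKdef, ENNReal.inv_ne_top]
      have : ENNReal.ofReal q < 1 := ENNReal.ofReal_lt_one.2 hq1
      exact (tsub_pos_of_lt this).ne'
    set g : ℕ → ℝ≥0∞ := fun J =>
      ENNReal.ofReal (Real.sqrt D ^ d * q ^ (J + 1)) * K with hgdef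
    have hsumle : ∀ J : ℕ, (∑' i, EMetric.diam (T J i) ^ d) ≤ g J := by
      intro J
      rw [ENNReal.tsum_sigma']
      have hinner : ∀ j : ℕ, (∑' k : Fin D → Fin (ℓ ^ (ψ (J + j))),
          EMetric.diam (T J ⟨j, k⟩) ^ d)
          ≤ ENNReal.ofReal ((Real.sqrt D ^ d * q ^ (J + 1)) * q ^ j) := by
        intro j
        set n : ℕ := ψ (J + j) with hndef
        rw [tsum_fintype]
        have hterm : ∀ k : Fin D → Fin (ℓ ^ n), EMetric.diam (T J ⟨j, k⟩) ^ d
            ≤ if k ∈ S n then ENNReal.ofReal ((Real.sqrt D * ((ℓ:ℝ) ^ n)⁻¹) ^ d) else 0 := by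
          intro k
          by_cases hk : k ∈ S n
          · rw [if_pos hk]
            have hTeq : T J ⟨j, k⟩ = lCube D ℓ n (fun a => ((k a : ℕ))) := by
              rw [hTdef]; exact if_pos hk
            rw [hTeq, ← ENNReal.ofReal_rpow_of_nonneg (by positivity) hd.le]
            exact ENNReal.rpow_le_rpow (diam_lCube_le hℓ _ _) hd.le
          · rw [if_neg hk]
            have hTeq : T J ⟨j, k⟩ = (∅ : Set (EuclideanSpace ℝ (Fin D))) := by
              rw [hTdef]; exact if_neg hk
            rw [hTeq, EMetric.diam, Metric.ediam_empty, ENNReal.zero_rpow_of_pos hd]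
        calc (∑ k : Fin D → Fin (ℓ ^ n), EMetric.diam (T J ⟨j, k⟩) ^ d)
            ≤ ∑ k : Fin D → Fin (ℓ ^ n),
              if k ∈ S n then ENNReal.ofReal ((Real.sqrt D * ((ℓ:ℝ) ^ n)⁻¹) ^ d) else 0 :=
              Finset.sum_le_sum fun k _ => hterm k
          _ = ((S n).card : ℝ≥0∞) * ENNReal.ofReal ((Real.sqrt D * ((ℓ:ℝ) ^ n)⁻¹) ^ d) := by
              rw [← Finset.sum_filter, Finset.filter_univ_mem, Finset.sum_const, nsmul_eq_mul]
          _ = ENNReal.ofReal (((S n).card : ℝ) * (Real.sqrt D * ((ℓ:ℝ) ^ n)⁻¹) ^ d) := by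
              rw [ENNReal.ofReal_mul (by positivity), ENNReal.ofReal_natCast]
          _ ≤ ENNReal.ofReal (Real.sqrt D ^ d * q ^ n) := by
              apply ENNReal.ofReal_le_ofReal
              exact geom_real_bound hℓ1 (Real.sqrt_nonneg _) (Nat.cast_nonneg _) hd
                (by rw [htdef, hddef]; ring) (hcard n)
          _ ≤ ENNReal.ofReal ((Real.sqrt D ^ d * q ^ (J + 1)) * q ^ j) := by
              apply ENNReal.ofReal_le_ofReal
              rw [mul_assoc, ← pow_add]
              apply mul_le_mul_of_nonneg_left _ (by positivity)
              apply pow_le_pow_of_le_one hq0.le hq1.le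
              calc J + 1 + j = (J + j) + 1 := by omega
                _ ≤ n := hψge (J + j)
      calc (∑' (j : ℕ) (k : Fin D → Fin (ℓ ^ (ψ (J + j)))), EMetric.diam (T J ⟨j, k⟩) ^ d)
          ≤ ∑' j : ℕ, ENNReal.ofReal ((Real.sqrt D ^ d * q ^ (J + 1)) * q ^ j) :=
            ENNReal.tsum_le_tsum hinner
        _ = ∑' j : ℕ, ENNReal.ofReal (Real.sqrt D ^ d * q ^ (J + 1)) * (ENNReal.ofReal q) ^ j := by
            congr 1
            funext j
            rw [ENNReal.ofReal_mul (by positivity), ENNReal.ofReal_pow hq0.le]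
        _ = ENNReal.ofReal (Real.sqrt D ^ d * q ^ (J + 1)) * ∑' j : ℕ, (ENNReal.ofReal q) ^ j :=
            ENNReal.tsum_mul_left
        _ = g J := by rw [hgdef, ENNReal.tsum_geometric, hKdef]
    have hgtend : Tendsto g atTop (𝓝 0) := by
      have h1 : Tendsto (fun J : ℕ => Real.sqrt D ^ d * q ^ (J + 1)) atTop (𝓝 0) := by
        have h2 : Tendsto (fun J : ℕ => q ^ J) atTop (𝓝 0) :=
          tendsto_pow_atTop_nhds_zero_of_lt_one hq0.le hq1
        have h3 : Tendsto (fun J : ℕ => q ^ (J + 1)) atTop (𝓝 0) :=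
          h2.comp (tendsto_add_atTop_nat 1)
        have h4 := h3.const_mul (Real.sqrt D ^ d)
        simpa using h4
      have h5 := (ENNReal.continuous_ofReal.tendsto 0).comp h1
      simp only [Function.comp_def, ENNReal.ofReal_zero] at h5
      have h6 := ENNReal.Tendsto.mul_const h5 (Or.inr hKne)
      simpa [hgdef] using h6
    have hliminf0 : liminf (fun J => ∑' i, EMetric.diam (T J i) ^ d) atTop = 0 := by
      apply le_antisymm _ zero_le
      calc liminf (fun J => ∑' i, EMetric.diam (T J i) ^ d) atTop
          ≤ liminf g atTop := liminf_le_liminf (Filter.Eventually.of_forall hsumle)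
        _ = 0 := hgtend.liminf_eq
    exact le_antisymm (hmain.trans_eq hliminf0) zero_le
  have hdim : dimH E ≤ ENNReal.ofReal d := by
    have hco : ((d.toNNReal : ℝ≥0) : ℝ) = d := Real.coe_toNNReal d hd.le
    have hnn : μH[((d.toNNReal : ℝ≥0) : ℝ)] E ≠ ∞ := by
      rw [hco, hHzero]
      exact ENNReal.zero_ne_top
    have h7 := dimH_le_of_hausdorffMeasure_ne_top hnn
    rwa [ENNReal.ofReal]
  calc cubeDimLow D m
      ≤ dimH E := by
        rw [cubeDimLow]
        exact iInf_le_of_le E (iInf_le_of_le hEmeas (iInf_le_of_le hEsub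
          (iInf_le_of_le hEpos le_rfl)))
    _ ≤ ENNReal.ofReal d := hdim
    _ = ENNReal.ofReal (h + 3 * ε) := by rw [hddef]


theorem cubeDimLow_le_cubeHLow (D ℓ : ℕ) (hD : 1 ≤ D) (hℓ : 2 ≤ ℓ)
    (m : Measure (EuclideanSpace ℝ (Fin D))) [IsProbabilityMeasure m]
    (hsupp : m (unitBox D) = 1) :
    cubeDimLow D m ≤ ENNReal.ofReal (cubeHLow D ℓ m) := by
  apply ENNReal.le_of_forall_pos_le_add
  intro η hη _
  have hε : 0 < (η:ℝ)/3 := by positivity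
  calc cubeDimLow D m
      ≤ ENNReal.ofReal (cubeHLow D ℓ m + 3 * ((η:ℝ)/3)) :=
        cubeDimLow_le_add hD hℓ m hsupp hε
    _ = ENNReal.ofReal (cubeHLow D ℓ m + (η:ℝ)) := by congr 1; ring
    _ ≤ ENNReal.ofReal (cubeHLow D ℓ m) + ENNReal.ofReal (η:ℝ) := ENNReal.ofReal_add_le
    _ = ENNReal.ofReal (cubeHLow D ℓ m) + η := by rw [ENNReal.ofReal_coe_nnreal]
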